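/- Let ψ(μ) = 1{μ ≥ 0}·φ(x - μ) for fixed x ∈ ℝ, where φ is the standard normal density. Then there exists a constant C (depending on x) such that the Fourier transform ψ*(t) = ∫₀^∞ φ(x-μ) e^{itμ} dμ satisfies |ψ*(t)| ≤ C/√(t² + 1) for all t ∈ ℝ. -/

import Mathlib

open MeasureTheory

/-- Standard normal density. -/
noncomputable def stdNormalPDF (y : ℝ) : ℝ :=
  (Real.sqrt (2 * Real.pi))⁻¹ * Real.exp (-y ^ 2 / 2)

open Real Filter

section
variable (x : ℝ)

noncomputable def myc : ℝ := (Real.sqrt (2 * Real.pi))⁻¹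

lemma myc_pos : 0 < myc := inv_pos.2 (Real.sqrt_pos.2 (by positivity))

noncomputable def myf (x μ : ℝ) : ℝ := stdNormalPDF (x - μ)

lemma myf_eq (μ : ℝ) : myf x μ = myc * Real.exp (-(x - μ)^2/2) := rfl

lemma myf_pos (μ : ℝ) : 0 < myf x μ := by
  rw [myf_eq, myc]; positivity

lemma myf_cont : Continuous (myf x) := by
  unfold myf stdNormalPDF
  continuity

lemma myf_int : Integrable (myf x) := by
  have h := ((integrable_exp_neg_mul_sq (by norm_num : (0:ℝ) < 1/2)).const_mul myc).comp_sub_right x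
  apply h.congr
  filter_upwards with μ
  rw [myf_eq]
  congr 1
  ring_nf

noncomputable def myf' (x μ : ℝ) : ℝ := myc * ((x - μ) * Real.exp (-(x - μ)^2/2))

lemma myf'_int : Integrable (myf' x) := by
  have h := (((integrable_mul_exp_neg_mul_sq (by norm_num : (0:ℝ) < 1/2)).const_mul (-myc)).comp_sub_right x)
  apply h.congr
  filter_upwards with μ
  show -myc * ((μ - x) * Real.exp (-(1/2) * (μ - x)^2)) = myf' x μ
  rw [myf']
  ring_nf

lemma myf_hasDeriv (μ : ℝ) : HasDerivAt (myf x) (myf' x μ) μ := by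
  have h1 : HasDerivAt (fun μ : ℝ => x - μ) (-1) μ := (hasDerivAt_id μ).const_sub x
  have h2 := ((h1.pow 2).div_const 2).neg
  have h3 : HasDerivAt (fun μ : ℝ => -(x - μ)^2/2) (x - μ) μ := by
    have e : (fun μ : ℝ => -(x - μ)^2/2) = -fun y => ((fun μ => x - μ)^2) y / 2 := by
      funext y; simp only [Pi.neg_apply, Pi.pow_apply]; ring
    rw [e]
    refine h2.congr_deriv ?_
    norm_num
    ring
  have := h3.exp.const_mul myc
  exact this.congr_deriv (by rw [myf']; ring)

lemma myf_tendsto : Tendsto (myf x) atTop (nhds 0) := by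
  have h1 : Tendsto (fun μ : ℝ => -(x - μ)^2/2) atTop atBot := by
    have : Tendsto (fun μ : ℝ => (μ - x)^2/2) atTop atTop := by
      apply Tendsto.atTop_div_const (by norm_num)
      exact (tendsto_pow_atTop (by norm_num)).comp (tendsto_atTop_add_const_right _ (-x) tendsto_id)
    have := tendsto_neg_atBot_iff.mpr this
    apply this.congr
    intro μ; ring
  have h2 := Real.tendsto_exp_atBot.comp h1
  have := h2.const_mul myc
  rw [mul_zero] at this; exact this
end

section
variable (x t : ℝ)

noncomputable def myE (t μ : ℝ) : ℂ := Complex.exp (Complex.I * t * μ)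

lemma myE_norm (μ : ℝ) : ‖myE t μ‖ = 1 := by
  rw [myE, Complex.norm_exp]
  simp [Complex.mul_re, Complex.mul_im]

lemma myE_hasDeriv (μ : ℝ) :
    HasDerivAt (myE t) (Complex.I * t * myE t μ) μ := by
  have h0 : HasDerivAt (fun μ : ℝ => ((μ : ℝ) : ℂ)) 1 μ := by
    simpa using (hasDerivAt_id μ).ofReal_comp
  have h1 : HasDerivAt (fun μ : ℝ => Complex.I * t * (μ:ℂ)) (Complex.I * t) μ := by
    simpa using h0.const_mul (Complex.I * t)
  have := h1.cexp
  unfold myE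
  convert this using 1
  ring

lemma myfE_int : Integrable (fun μ => (myf x μ : ℂ) * myE t μ) := by
  refine (myf_int x).abs.mono' ?_ ?_
  · exact ((Complex.continuous_ofReal.comp (myf_cont x)).mul
      (Complex.continuous_exp.comp (by continuity))).aestronglyMeasurable
  · filter_upwards with μ
    rw [norm_mul, myE_norm, Complex.norm_real]
    simp [Real.norm_eq_abs]

lemma myf'E_int : Integrable (fun μ => (myf' x μ : ℂ) * myE t μ) := by
  refine (myf'_int x).abs.mono' ?_ ?_
  · have hc : Continuous (myf' x) := by
      unfold myf' myc; continuity
    exact ((Complex.continuous_ofReal.comp hc).mul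
      (Complex.continuous_exp.comp (by continuity))).aestronglyMeasurable
  · filter_upwards with μ
    rw [norm_mul, myE_norm, Complex.norm_real]
    simp [Real.norm_eq_abs]

lemma key (ht : t ≠ 0) :
    ∫ μ in Set.Ioi (0:ℝ), (myf x μ : ℂ) * myE t μ =
      -((myf x 0 : ℂ) * myE t 0 / (Complex.I * t))
        - (∫ μ in Set.Ioi (0:ℝ), (myf' x μ : ℂ) * myE t μ) / (Complex.I * t) := by
  have hIt : (Complex.I * (t:ℂ)) ≠ 0 :=
    mul_ne_zero Complex.I_ne_zero (Complex.ofReal_ne_zero.mpr ht)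
  have hderiv : ∀ μ ∈ Set.Ici (0:ℝ),
      HasDerivAt (fun μ => (myf x μ : ℂ) * myE t μ / (Complex.I * t))
        ((myf' x μ : ℂ) * myE t μ / (Complex.I * t) + (myf x μ : ℂ) * myE t μ) μ := by
    intro μ _
    have h1 := ((myf_hasDeriv x μ).ofReal_comp.mul (myE_hasDeriv t μ)).div_const (Complex.I * t)
    refine h1.congr_deriv ?_
    rw [div_eq_iff hIt, add_mul, div_mul_cancel₀ _ hIt]
    ring
  have htend : Tendsto (fun μ => (myf x μ : ℂ) * myE t μ / (Complex.I * t)) atTop (nhds 0) := by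
    rw [tendsto_zero_iff_norm_tendsto_zero]
    have h2 := (myf_tendsto x).div_const ‖Complex.I * (t:ℂ)‖
    rw [zero_div] at h2
    apply h2.congr
    intro μ
    rw [norm_div]
    congr 1
    rw [norm_mul, myE_norm, mul_one, Complex.norm_real, Real.norm_eq_abs,
      abs_of_pos (myf_pos x μ)]
  have hint : IntegrableOn
      (fun μ => (myf' x μ : ℂ) * myE t μ / (Complex.I * t) + (myf x μ : ℂ) * myE t μ)
      (Set.Ioi (0:ℝ)) :=
    (((myf'E_int x t).div_const _).add (myfE_int x t)).integrableOn
  have h := integral_Ioi_of_hasDerivAt_of_tendsto' hderiv hint htend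
  rw [integral_add (((myf'E_int x t).div_const _).integrableOn) ((myfE_int x t).integrableOn),
    integral_div, zero_sub] at h
  linear_combination h
end

section
variable (x t : ℝ)

noncomputable def myA (x : ℝ) : ℝ := ∫ μ in Set.Ioi (0:ℝ), myf x μ
noncomputable def myB (x : ℝ) : ℝ := myf x 0 + ∫ μ in Set.Ioi (0:ℝ), |myf' x μ|

lemma myA_nonneg : 0 ≤ myA x := setIntegral_nonneg measurableSet_Ioi fun μ _ => (myf_pos x μ).le
lemma myB_nonneg : 0 ≤ myB x :=
  add_nonneg (myf_pos x 0).le (setIntegral_nonneg measurableSet_Ioi fun μ _ => abs_nonneg _)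

lemma bound1 : ‖∫ μ in Set.Ici (0:ℝ), (myf x μ : ℂ) * myE t μ‖ ≤ myA x := by
  refine (norm_integral_le_integral_norm _).trans ?_
  rw [myA, ← integral_Ici_eq_integral_Ioi]
  apply setIntegral_mono_on
  · exact ((myfE_int x t).norm).integrableOn
  · exact (myf_int x).integrableOn
  · exact measurableSet_Ici
  · intro μ _
    rw [norm_mul, myE_norm, mul_one, Complex.norm_real, Real.norm_eq_abs,
      abs_of_pos (myf_pos x μ)]

lemma bound2 (ht : t ≠ 0) :
    ‖∫ μ in Set.Ici (0:ℝ), (myf x μ : ℂ) * myE t μ‖ ≤ myB x / |t| := by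
  rw [integral_Ici_eq_integral_Ioi, key x t ht]
  have hItnorm : ‖Complex.I * (t:ℂ)‖ = |t| := by
    rw [norm_mul, Complex.norm_I, one_mul, Complex.norm_real, Real.norm_eq_abs]
  have h1 : ‖(myf x 0 : ℂ) * myE t 0 / (Complex.I * t)‖ = myf x 0 / |t| := by
    rw [norm_div, hItnorm, norm_mul, myE_norm, mul_one, Complex.norm_real, Real.norm_eq_abs,
      abs_of_pos (myf_pos x 0)]
  have h2 : ‖(∫ μ in Set.Ioi (0:ℝ), (myf' x μ : ℂ) * myE t μ) / (Complex.I * t)‖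
      ≤ (∫ μ in Set.Ioi (0:ℝ), |myf' x μ|) / |t| := by
    rw [norm_div, hItnorm]
    gcongr
    refine (norm_integral_le_integral_norm _).trans_eq ?_
    refine setIntegral_congr_fun measurableSet_Ioi (fun μ _ => ?_)
    rw [norm_mul, myE_norm, mul_one, Complex.norm_real, Real.norm_eq_abs]
  calc ‖-((myf x 0 : ℂ) * myE t 0 / (Complex.I * t))
        - (∫ μ in Set.Ioi (0:ℝ), (myf' x μ : ℂ) * myE t μ) / (Complex.I * t)‖
      ≤ ‖(myf x 0 : ℂ) * myE t 0 / (Complex.I * t)‖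
        + ‖(∫ μ in Set.Ioi (0:ℝ), (myf' x μ : ℂ) * myE t μ) / (Complex.I * t)‖ := by
        refine (norm_sub_le _ _).trans ?_
        rw [norm_neg]
    _ ≤ myf x 0 / |t| + (∫ μ in Set.Ioi (0:ℝ), |myf' x μ|) / |t| := by
        rw [h1]; exact add_le_add le_rfl h2
    _ = myB x / |t| := by rw [myB, add_div]

end


/-- For `ψ(μ) = 1{μ ≥ 0} φ(x - μ)` with fixed `x`, the Fourier transform
`ψ*(t) = ∫₀^∞ φ(x-μ) e^{itμ} dμ` satisfies `|ψ*(t)| ≤ C/√(t²+1)` for some constant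
`C` depending on `x`. -/
theorem stmt16 (x : ℝ) :
    ∃ C : ℝ, 0 < C ∧ ∀ t : ℝ,
      ‖∫ μ in Set.Ici (0 : ℝ),
          (stdNormalPDF (x - μ) : ℂ) * Complex.exp (Complex.I * (t : ℂ) * (μ : ℂ))‖
        ≤ C / Real.sqrt (t ^ 2 + 1) := by
  have hA := myA_nonneg x
  have hB := myB_nonneg x
  have hC : 0 < Real.sqrt 2 * (myA x + myB x + 1) := by positivity
  refine ⟨Real.sqrt 2 * (myA x + myB x + 1), hC, fun t => ?_⟩
  have hs : 0 < Real.sqrt (t ^ 2 + 1) := Real.sqrt_pos.2 (by positivity)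
  show ‖∫ μ in Set.Ici (0:ℝ), (myf x μ : ℂ) * myE t μ‖ ≤ _
  rcases le_or_gt |t| 1 with h | h
  · have hle : Real.sqrt (t ^ 2 + 1) ≤ Real.sqrt 2 := by
      apply Real.sqrt_le_sqrt
      nlinarith [abs_nonneg t, sq_abs t]
    calc ‖∫ μ in Set.Ici (0:ℝ), (myf x μ : ℂ) * myE t μ‖ ≤ myA x := bound1 x t
      _ ≤ Real.sqrt 2 * (myA x + myB x + 1) / Real.sqrt (t ^ 2 + 1) := by
          rw [le_div_iff₀ hs]
          calc myA x * Real.sqrt (t ^ 2 + 1) ≤ (myA x + myB x + 1) * Real.sqrt 2 :=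
                mul_le_mul (by linarith) hle hs.le (by linarith)
            _ = Real.sqrt 2 * (myA x + myB x + 1) := mul_comm _ _
  · have ht : t ≠ 0 := by rintro rfl; norm_num at h
    have habs : 0 < |t| := abs_pos.mpr ht
    have hle : Real.sqrt (t ^ 2 + 1) ≤ Real.sqrt 2 * |t| := by
      rw [← Real.sqrt_sq_eq_abs, ← Real.sqrt_mul (by norm_num : (0:ℝ) ≤ 2)]
      apply Real.sqrt_le_sqrt
      nlinarith [sq_abs t]
    calc ‖∫ μ in Set.Ici (0:ℝ), (myf x μ : ℂ) * myE t μ‖ ≤ myB x / |t| := bound2 x t ht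
      _ = Real.sqrt 2 * myB x / (Real.sqrt 2 * |t|) := by
          rw [mul_div_mul_left _ _ (by positivity : Real.sqrt 2 ≠ 0)]
      _ ≤ Real.sqrt 2 * (myA x + myB x + 1) / Real.sqrt (t ^ 2 + 1) := by
          refine div_le_div₀ (by positivity) ?_ hs hle
          have := Real.sqrt_nonneg 2
          nlinarith
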